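/- Let n/2 < k ≤ n, θ = (n−k)/k. Let w̃ : (0, r₀] → ℝ be C² and satisfy (2.20)–(2.21): w̃'/r − (w̃')²/2 ≥ 0 and (w̃'' + w̃'/r) − (1−θ)(w̃'/r − (w̃')²/2) ≥ 0 on (0, r₀], and suppose w̃(r) → −∞ as r → 0⁺. Then w̃(r) = 2 log r + C on (0, r₀] for some constant C. -/

import Mathlib

open Set Filter

private lemma monoAux11 {f f' : ℝ → ℝ} {a b : ℝ}
    (hd : ∀ x ∈ Set.Ioc a b, HasDerivAt f (f' x) x)
    (h0 : ∀ x ∈ Set.Ioc a b, 0 ≤ f' x) : MonotoneOn f (Set.Ioc a b) := by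
  apply monotoneOn_of_deriv_nonneg (convex_Ioc a b)
  · exact fun x hx => (hd x hx).continuousAt.continuousWithinAt
  · rw [interior_Ioc]
    exact fun x hx => ((hd x (Ioo_subset_Ioc_self hx)).differentiableAt).differentiableWithinAt
  · rw [interior_Ioc]
    intro x hx
    rw [(hd x (Ioo_subset_Ioc_self hx)).deriv]
    exact h0 x (Ioo_subset_Ioc_self hx)

/-- For `n/2 < k ≤ n`, `θ = (n-k)/k`: if `w̃` satisfies the radial admissibility
inequalities (2.20)–(2.21) on `(0, r₀]` and `w̃(r) → -∞` as `r → 0⁺`, then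
`w̃(r) = 2 log r + C`. -/
theorem stmt11 (n k : ℕ) (hn : 3 ≤ n) (hk1 : (n : ℝ) / 2 < k) (hk2 : k ≤ n)
    (θ : ℝ) (hθ : θ = ((n : ℝ) - k) / k)
    (r₀ : ℝ) (hr₀ : 0 < r₀) (w w' w'' : ℝ → ℝ)
    (hD1 : ∀ r ∈ Set.Ioc (0:ℝ) r₀, HasDerivAt w (w' r) r)
    (hD2 : ∀ r ∈ Set.Ioc (0:ℝ) r₀, HasDerivAt w' (w'' r) r)
    (h1 : ∀ r ∈ Set.Ioc (0:ℝ) r₀, 0 ≤ w' r / r - (w' r) ^ 2 / 2)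
    (h2 : ∀ r ∈ Set.Ioc (0:ℝ) r₀,
      0 ≤ (w'' r + w' r / r) - (1 - θ) * (w' r / r - (w' r) ^ 2 / 2))
    (hblow : Tendsto w (nhdsWithin 0 (Set.Ioi 0)) atBot) :
    ∃ C : ℝ, ∀ r ∈ Set.Ioc (0:ℝ) r₀, w r = 2 * Real.log r + C := by
  -- basic facts about θ
  have hnk : (k : ℝ) ≤ n := by exact_mod_cast hk2
  have hn3 : (3 : ℝ) ≤ n := by exact_mod_cast hn
  have hkpos : (0 : ℝ) < k := by linarith
  have hθ0 : 0 ≤ θ := by rw [hθ]; exact div_nonneg (by linarith) hkpos.le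
  have hθ1 : θ < 1 := by rw [hθ, div_lt_one hkpos]; linarith
  -- multiplied-out versions of h1 and h2
  have h1' : ∀ r ∈ Set.Ioc (0:ℝ) r₀, 0 ≤ w' r - r * (w' r) ^ 2 / 2 := by
    intro r hr
    have hrne : r ≠ 0 := ne_of_gt hr.1
    have e : r * (w' r / r - (w' r) ^ 2 / 2) = w' r - r * (w' r) ^ 2 / 2 := by
      field_simp
    rw [← e]; exact mul_nonneg hr.1.le (h1 r hr)
  have h2' : ∀ r ∈ Set.Ioc (0:ℝ) r₀,
      (1 - θ) * (w' r - r * (w' r) ^ 2 / 2) ≤ w' r + r * w'' r := by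
    intro r hr
    have e : r * ((w'' r + w' r / r) - (1 - θ) * (w' r / r - (w' r) ^ 2 / 2))
        = (w' r + r * w'' r) - (1 - θ) * (w' r - r * (w' r) ^ 2 / 2) := by
      have hrne : r ≠ 0 := ne_of_gt hr.1
      field_simp; ring
    have := mul_nonneg hr.1.le (h2 r hr)
    rw [e] at this; linarith
  -- 0 ≤ w' and r * w' ≤ 2
  have hw'0 : ∀ r ∈ Set.Ioc (0:ℝ) r₀, 0 ≤ w' r := by
    intro r hr
    have h := h1' r hr
    nlinarith [mul_nonneg hr.1.le (sq_nonneg (w' r))]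
  have hg2 : ∀ r ∈ Set.Ioc (0:ℝ) r₀, r * w' r ≤ 2 := by
    intro r hr
    have h := mul_nonneg hr.1.le (h1' r hr)
    nlinarith [sq_nonneg (r * w' r - 2)]
  -- g(r) = r * w'(r) is monotone
  have hg : ∀ r ∈ Set.Ioc (0:ℝ) r₀, HasDerivAt (fun s => s * w' s) (w' r + r * w'' r) r := by
    intro r hr
    have : HasDerivAt (fun s => s * w' s) (1 * w' r + r * w'' r) r := (hasDerivAt_id r).mul (hD2 r hr)
    simpa using this
  have hg'0 : ∀ r ∈ Set.Ioc (0:ℝ) r₀, 0 ≤ w' r + r * w'' r := by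
    intro r hr
    have := h2' r hr
    have := mul_nonneg (by linarith : (0:ℝ) ≤ 1 - θ) (h1' r hr)
    linarith
  have hgmono : MonotoneOn (fun s => s * w' s) (Set.Ioc (0:ℝ) r₀) := monoAux11 hg hg'0
  by_cases hcase : ∀ r ∈ Set.Ioc (0:ℝ) r₀, 2 ≤ r * w' r
  · -- main case : r * w' ≡ 2, hence w = 2 log r + C
    have hgeq : ∀ r ∈ Set.Ioc (0:ℝ) r₀, w' r = 2 / r := by
      intro r hr
      have h := le_antisymm (hg2 r hr) (hcase r hr)
      have hrne : r ≠ 0 := ne_of_gt hr.1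
      field_simp
      linarith [mul_comm r (w' r), mul_comm (w' r) r, h]
    have hf0 : ∀ r ∈ Set.Ioc (0:ℝ) r₀,
        HasDerivAt (fun s => w s - 2 * Real.log s) 0 r := by
      intro r hr
      have hd := (hD1 r hr).sub ((Real.hasDerivAt_log (ne_of_gt hr.1)).const_mul 2)
      have : w' r - 2 * r⁻¹ = 0 := by
        rw [hgeq r hr]; field_simp; simp
      rwa [this] at hd
    refine ⟨w r₀ - 2 * Real.log r₀, fun r hr => ?_⟩
    have hsub : Set.Icc r r₀ ⊆ Set.Ioc (0:ℝ) r₀ := fun x hx => ⟨lt_of_lt_of_le hr.1 hx.1, hx.2⟩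
    have hconst := constant_of_has_deriv_right_zero
      (f := fun s => w s - 2 * Real.log s) (a := r) (b := r₀)
      (fun x hx => ((hf0 x (hsub hx)).continuousAt).continuousWithinAt)
      (fun x hx => (hf0 x (hsub ⟨hx.1, hx.2.le⟩)).hasDerivWithinAt)
    have h3 : w r₀ - 2 * Real.log r₀ = w r - 2 * Real.log r := hconst r₀ ⟨hr.2, le_refl r₀⟩
    linarith
  · -- blow-up case: derive a contradiction
    exfalso
    push_neg at hcase
    obtain ⟨r₁, hr₁, hc2⟩ := hcase
    set c : ℝ := r₁ * w' r₁ with hc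
    have hc0 : 0 ≤ c := mul_nonneg hr₁.1.le (hw'0 r₁ hr₁)
    set β : ℝ := (1 - θ) * (2 - c) / 2 with hβ
    have hβpos : 0 < β := by
      apply div_pos (mul_pos (by linarith) (by linarith)); norm_num
    have hSsub : Set.Ioc (0:ℝ) r₁ ⊆ Set.Ioc (0:ℝ) r₀ := fun x hx => ⟨hx.1, hx.2.trans hr₁.2⟩
    have hgc : ∀ r ∈ Set.Ioc (0:ℝ) r₁, r * w' r ≤ c := by
      intro r hr
      exact hgmono (hSsub hr) hr₁ hr.2
    -- key pointwise inequality: β * w' ≤ w' + r w''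
    have hkey : ∀ r ∈ Set.Ioc (0:ℝ) r₁, β * w' r ≤ w' r + r * w'' r := by
      intro r hr
      have h2'' := h2' r (hSsub hr)
      have hw' := hw'0 r (hSsub hr)
      have hgcr := hgc r hr
      nlinarith [mul_nonneg (mul_nonneg (by linarith : (0:ℝ) ≤ 1 - θ) hw')
        (sub_nonneg.2 hgcr)]
    -- φ(r) = (r w') r^(-β) is monotone on (0, r₁]
    have hφd : ∀ r ∈ Set.Ioc (0:ℝ) r₁,
        HasDerivAt (fun s => (s * w' s) * s ^ (-β))
          ((w' r + r * w'' r) * r ^ (-β) + (r * w' r) * (-β * r ^ (-β - 1))) r := by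
      intro r hr
      exact (hg r (hSsub hr)).mul (Real.hasDerivAt_rpow_const (Or.inl (ne_of_gt hr.1)))
    have hφmono : MonotoneOn (fun s => (s * w' s) * s ^ (-β)) (Set.Ioc (0:ℝ) r₁) := by
      apply monoAux11 hφd
      intro r hr
      have hrpos := hr.1
      have hrb : r ^ (-β - 1) = r ^ (-β) * r⁻¹ := by
        rw [show -β - 1 = -β + (-1) by ring, Real.rpow_add hrpos, Real.rpow_neg_one]
      have hrbpos : (0:ℝ) < r ^ (-β) := Real.rpow_pos_of_pos hrpos _
      have hk := hkey r hr
      rw [hrb]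
      have e : (w' r + r * w'' r) * r ^ (-β) + r * w' r * (-β * (r ^ (-β) * r⁻¹))
          = r ^ (-β) * ((w' r + r * w'' r) - β * w' r) := by
        field_simp; ring
      rw [e]
      exact mul_nonneg hrbpos.le (by linarith)
    -- hence r w' ≤ Cc r^β with Cc = c r₁^(-β), so w' ≤ Cc r^(β-1)
    set Cc : ℝ := c * r₁ ^ (-β) with hCc
    have hCc0 : 0 ≤ Cc := mul_nonneg hc0 (Real.rpow_pos_of_pos hr₁.1 _).le
    have hφle : ∀ r ∈ Set.Ioc (0:ℝ) r₁, (r * w' r) * r ^ (-β) ≤ Cc := by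
      intro r hr
      exact hφmono hr (right_mem_Ioc.2 hr₁.1) hr.2
    -- ψ(r) = (Cc/β) r^β - w r is monotone on (0, r₁]
    have hψd : ∀ r ∈ Set.Ioc (0:ℝ) r₁,
        HasDerivAt (fun s => (Cc / β) * s ^ β - w s)
          ((Cc / β) * (β * r ^ (β - 1)) - w' r) r := by
      intro r hr
      exact ((Real.hasDerivAt_rpow_const (Or.inl (ne_of_gt hr.1))).const_mul (Cc / β)).sub
        (hD1 r (hSsub hr))
    have hψmono : MonotoneOn (fun s => (Cc / β) * s ^ β - w s) (Set.Ioc (0:ℝ) r₁) := by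
      apply monoAux11 hψd
      intro r hr
      have hrpos := hr.1
      have hb : (Cc / β) * (β * r ^ (β - 1)) = Cc * (r ^ β * r⁻¹) := by
        rw [show β - 1 = β + (-1) by ring, Real.rpow_add hrpos, Real.rpow_neg_one]
        field_simp
      rw [hb]
      have hφr := hφle r hr
      have hrb : r ^ (-β) = (r ^ β)⁻¹ := Real.rpow_neg hrpos.le β
      have hbpos : (0:ℝ) < r ^ β := Real.rpow_pos_of_pos hrpos _
      rw [hrb] at hφr
      -- from (r w') (r^β)⁻¹ ≤ Cc get r w' ≤ Cc r^β, hence w' ≤ Cc r^β / r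
      have h1 : r * w' r ≤ Cc * r ^ β := by
        have := mul_le_mul_of_nonneg_right hφr hbpos.le
        rwa [mul_assoc, inv_mul_cancel₀ (ne_of_gt hbpos), mul_one] at this
      rw [sub_nonneg, show Cc * (r ^ β * r⁻¹) = (Cc * r ^ β) * r⁻¹ by ring]
      have h2r : w' r = (r * w' r) * r⁻¹ := by field_simp
      rw [h2r]
      exact mul_le_mul_of_nonneg_right h1 (inv_nonneg.2 hrpos.le)
    -- lower bound for w on (0, r₁]
    have hlb : ∀ r ∈ Set.Ioc (0:ℝ) r₁, w r₁ - (Cc / β) * r₁ ^ β ≤ w r := by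
      intro r hr
      have := hψmono hr (right_mem_Ioc.2 hr₁.1) hr.2
      simp only at this
      have hpos : 0 ≤ (Cc / β) * r ^ β :=
        mul_nonneg (div_nonneg hCc0 hβpos.le) (Real.rpow_pos_of_pos hr.1 _).le
      linarith
    -- contradiction with blow-up
    have hev1 : ∀ᶠ r in nhdsWithin 0 (Set.Ioi 0), w r < w r₁ - (Cc / β) * r₁ ^ β :=
      hblow.eventually (eventually_lt_atBot _)
    have hev2 : ∀ᶠ r in nhdsWithin 0 (Set.Ioi 0), r ∈ Set.Ioc (0:ℝ) r₁ :=
      Filter.mem_of_superset (Ioo_mem_nhdsGT_of_mem ⟨le_refl 0, hr₁.1⟩)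
        (fun x hx => ⟨hx.1, hx.2.le⟩)
    obtain ⟨r, h1r, h2r⟩ := (hev1.and hev2).exists
    exact absurd (hlb r h2r) (not_le.2 h1r)
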